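/- Let $X$ and $Y$ be finite-dimensional normed vector spaces, and let $T$ be a multivalued map assigning to each $x \in X$ a nonempty subset $T(x) \subseteq Y$. Assume $T$ is weakly continuous: for every $x \in X$ and $\epsilon > 0$ there exists $\delta > 0$ such that $\|y - x\| < \delta$ implies $T(y) \subseteq T(x) + \{v \in Y : \|v\| < \epsilon\}$. Then the set $\{x \in X : T(x) \text{ is a singleton}\}$ is a Borel subset of $X$. -/

import Mathlib

open scoped Pointwise ENNReal
/-- For a weakly continuous multivalued map with nonempty values between
finite-dimensional normed spaces, the set of points where the value is a singleton
is Borel. -/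
theorem singleton_set_of_weakly_continuous_multimap_measurable
    {X Y : Type*} [NormedAddCommGroup X] [NormedSpace ℝ X] [FiniteDimensional ℝ X]
    [MeasurableSpace X] [BorelSpace X]
    [NormedAddCommGroup Y] [NormedSpace ℝ Y] [FiniteDimensional ℝ Y]
    (T : X → Set Y) (hne : ∀ x, (T x).Nonempty)
    (hwc : ∀ x : X, ∀ ε : ℝ, 0 < ε → ∃ δ : ℝ, 0 < δ ∧ ∀ y : X, ‖y - x‖ < δ →
      T y ⊆ T x + {v : Y | ‖v‖ < ε}) :
    MeasurableSet {x : X | ∃ y : Y, T x = {y}} := by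
  -- the sets where the diameter is small are open
  have key : ∀ r : ℝ≥0∞, 0 < r → r ≠ ⊤ → IsOpen {x | EMetric.diam (T x) < r} := by
    intro r hr hrt
    rw [Metric.isOpen_iff]
    intro x hx
    simp only [Set.mem_setOf_eq] at hx
    have hdt : EMetric.diam (T x) ≠ ⊤ := (hx.trans_le le_top).ne
    have hdR : (EMetric.diam (T x)).toReal < r.toReal :=
      (ENNReal.toReal_lt_toReal hdt hrt).mpr hx
    set ε : ℝ := (r.toReal - (EMetric.diam (T x)).toReal) / 3 with hε
    have hεpos : 0 < ε := by dsimp [ε]; linarith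
    obtain ⟨δ, hδ, hδ'⟩ := hwc x ε hεpos
    refine ⟨δ, hδ, ?_⟩
    intro y hy
    rw [Metric.mem_ball, dist_eq_norm] at hy
    have hsub := hδ' y hy
    simp only [Set.mem_setOf_eq]
    have hdiam : EMetric.diam (T y) ≤
        EMetric.diam (T x) + ENNReal.ofReal ε + ENNReal.ofReal ε := by
      apply EMetric.diam_le
      intro a ha b hb
      obtain ⟨a', ha', u, hu, hau⟩ := hsub ha
      obtain ⟨b', hb', v, hv, hbv⟩ := hsub hb
      simp only [Set.mem_setOf_eq] at hu hv
      have h1 : edist a b ≤ edist a' b' + edist u v := by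
        rw [← hau, ← hbv]
        exact edist_add_add_le a' u b' v
      have h2 : edist a' b' ≤ EMetric.diam (T x) := EMetric.edist_le_diam_of_mem ha' hb'
      have h3 : edist u v ≤ ENNReal.ofReal ε + ENNReal.ofReal ε := by
        calc edist u v ≤ edist u 0 + edist 0 v := edist_triangle _ _ _
          _ = ENNReal.ofReal ‖u‖ + ENNReal.ofReal ‖v‖ := by
              rw [edist_zero_right, edist_zero_left]
              exact (congrArg₂ (· + ·) (ofReal_norm u) (ofReal_norm v)).symm
          _ ≤ ENNReal.ofReal ε + ENNReal.ofReal ε :=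
              add_le_add (ENNReal.ofReal_le_ofReal hu.le) (ENNReal.ofReal_le_ofReal hv.le)
      calc edist a b ≤ edist a' b' + edist u v := h1
        _ ≤ EMetric.diam (T x) + (ENNReal.ofReal ε + ENNReal.ofReal ε) := add_le_add h2 h3
        _ = EMetric.diam (T x) + ENNReal.ofReal ε + ENNReal.ofReal ε := by ring
    refine hdiam.trans_lt ?_
    have : EMetric.diam (T x) + ENNReal.ofReal ε + ENNReal.ofReal ε
        = ENNReal.ofReal ((EMetric.diam (T x)).toReal + ε + ε) := by
      rw [ENNReal.ofReal_add (by positivity) hεpos.le,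
        ENNReal.ofReal_add ENNReal.toReal_nonneg hεpos.le, ENNReal.ofReal_toReal hdt]
    rw [this, ENNReal.ofReal_lt_iff_lt_toReal (by positivity) hrt]
    dsimp [ε]; linarith
  -- the target set is a countable intersection of such open sets
  have hset : {x : X | ∃ y : Y, T x = {y}}
      = ⋂ n : ℕ, {x | EMetric.diam (T x) < ((n : ℝ≥0∞) + 1)⁻¹} := by
    ext x
    simp only [Set.mem_setOf_eq, Set.mem_iInter]
    constructor
    · rintro ⟨y, hy⟩ n
      rw [hy, show EMetric.diam ({y} : Set Y) = 0 from Metric.ediam_singleton]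
      exact ENNReal.inv_pos.mpr (by simp)
    · intro h
      have hzero : EMetric.diam (T x) = 0 := by
        by_contra hd
        obtain ⟨n, hn⟩ := ENNReal.exists_inv_nat_lt hd
        have hle : ((n : ℝ≥0∞) + 1)⁻¹ ≤ ((n : ℝ≥0∞))⁻¹ :=
          ENNReal.inv_le_inv.mpr (le_add_of_nonneg_right zero_le_one)
        exact absurd (h n) (not_lt.mpr (hle.trans hn.le))
      have hsub : (T x).Subsingleton := EMetric.diam_eq_zero_iff.mp hzero
      obtain ⟨y, hy⟩ := hne x
      exact ⟨y, hsub.eq_singleton_of_mem hy⟩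
  rw [hset]
  exact MeasurableSet.iInter fun n =>
    (key _ (ENNReal.inv_pos.mpr (by simp)) (by simp)).measurableSet
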